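/- Let A > 0 and ε > 0. If r is a positive integer with r ≥ max(2eA, log₂(2ε⁻¹)), then for all x ∈ [−A, A] and y ∈ [−1, 1] one has |e^{ixy} − Σ_{n=0}^{r−1} (iⁿ/n!) xⁿ yⁿ| ≤ ε. In particular, the ε-separation rank of e^{ixy} on [−A,A] × [−1,1] is at most 1 + max(2eA, log₂(2ε⁻¹)). -/

import Mathlib

open scoped BigOperators

lemma aux_succ_pow (n : ℕ) : ((n : ℝ) + 1) ^ n ≤ Real.exp 1 * (n : ℝ) ^ n := by
  rcases Nat.eq_zero_or_pos n with h | h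
  · subst h; simpa using Real.one_le_exp zero_le_one
  · have hn : (0 : ℝ) < n := by exact_mod_cast h
    have h1 : (1 : ℝ) + 1 / n ≤ Real.exp (1 / n) := by
      have := Real.add_one_le_exp (1 / (n : ℝ)); linarith
    have h2 : ((1 : ℝ) + 1 / n) ^ n ≤ Real.exp (1 / n) ^ n := by
      apply pow_le_pow_left₀ (by positivity) h1
    have h3 : Real.exp (1 / (n : ℝ)) ^ n = Real.exp 1 := by
      rw [← Real.exp_nat_mul]
      congr 1
      field_simp
    calc ((n : ℝ) + 1) ^ n = ((n : ℝ) * (1 + 1 / n)) ^ n := by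
          congr 1; field_simp
      _ = (n : ℝ) ^ n * ((1 : ℝ) + 1 / n) ^ n := mul_pow _ _ _
      _ ≤ (n : ℝ) ^ n * Real.exp 1 := by
          rw [← h3]; exact mul_le_mul_of_nonneg_left h2 (by positivity)
      _ = Real.exp 1 * (n : ℝ) ^ n := mul_comm _ _

lemma aux_pow_le_factorial (n : ℕ) :
    (n : ℝ) ^ n ≤ Real.exp 1 ^ n * (n.factorial : ℝ) := by
  induction n with
  | zero => simp
  | succ n ih =>
      have hfac : (0 : ℝ) ≤ (n.factorial : ℝ) := by positivity
      have h1 : ((n : ℝ) + 1) ^ (n + 1) = ((n : ℝ) + 1) ^ n * ((n : ℝ) + 1) := pow_succ _ _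
      have h2 : ((n : ℝ) + 1) ^ n ≤ Real.exp 1 * ((Real.exp 1) ^ n * n.factorial) :=
        le_trans (aux_succ_pow n)
          (mul_le_mul_of_nonneg_left ih (le_of_lt (Real.exp_pos 1)))
      have hpos : (0 : ℝ) ≤ (n : ℝ) + 1 := by positivity
      calc ((n + 1 : ℕ) : ℝ) ^ (n + 1) = ((n : ℝ) + 1) ^ n * ((n : ℝ) + 1) := by
            push_cast; rw [h1]
        _ ≤ (Real.exp 1 * ((Real.exp 1) ^ n * n.factorial)) * ((n : ℝ) + 1) :=
            mul_le_mul_of_nonneg_right h2 hpos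
        _ = Real.exp 1 ^ (n + 1) * ((n + 1).factorial : ℝ) := by
            rw [Nat.factorial_succ]; push_cast; ring

theorem stmt_0 (A ε : ℝ) (hA : 0 < A) (hε : 0 < ε) :
    (∀ r : ℕ, 0 < r →
      max (2 * Real.exp 1 * A) (Real.logb 2 (2 / ε)) ≤ (r : ℝ) →
      ∀ x ∈ Set.Icc (-A) A, ∀ y ∈ Set.Icc (-1 : ℝ) 1,
        ‖Complex.exp (Complex.I * (x : ℂ) * (y : ℂ)) -
          ∑ n ∈ Finset.range r,
            Complex.I ^ n / (n.factorial : ℂ) * (x : ℂ) ^ n * (y : ℂ) ^ n‖ ≤ ε) ∧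
    (∃ r : ℕ, (r : ℝ) ≤ 1 + max (2 * Real.exp 1 * A) (Real.logb 2 (2 / ε)) ∧
      ∃ (c : Fin r → ℝ → ℂ) (d : Fin r → ℝ → ℂ),
        ∀ x ∈ Set.Icc (-A) A, ∀ y ∈ Set.Icc (-1 : ℝ) 1,
          ‖Complex.exp (Complex.I * (x : ℂ) * (y : ℂ)) -
            ∑ n, c n x * d n y‖ ≤ ε) := by
  have main : ∀ r : ℕ, 0 < r →
      max (2 * Real.exp 1 * A) (Real.logb 2 (2 / ε)) ≤ (r : ℝ) →
      ∀ x ∈ Set.Icc (-A) A, ∀ y ∈ Set.Icc (-1 : ℝ) 1,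
        ‖Complex.exp (Complex.I * (x : ℂ) * (y : ℂ)) -
          ∑ n ∈ Finset.range r,
            Complex.I ^ n / (n.factorial : ℂ) * (x : ℂ) ^ n * (y : ℂ) ^ n‖ ≤ ε := by
    intro r hr hmax x hx y hy
    set z : ℂ := Complex.I * (x : ℂ) * (y : ℂ) with hz
    have hzabs : ‖z‖ ≤ A := by
      rw [hz]
      rw [norm_mul, norm_mul, Complex.norm_I, one_mul, Complex.norm_real, Complex.norm_real, Real.norm_eq_abs, Real.norm_eq_abs]
      have hx' : |x| ≤ A := abs_le.2 ⟨hx.1, hx.2⟩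
      have hy' : |y| ≤ 1 := abs_le.2 ⟨hy.1, hy.2⟩
      calc |x| * |y| ≤ A * 1 := mul_le_mul hx' hy' (abs_nonneg _) (le_of_lt hA)
        _ = A := mul_one A
    have hrA : 2 * Real.exp 1 * A ≤ (r : ℝ) := le_trans (le_max_left _ _) hmax
    have hrlog : Real.logb 2 (2 / ε) ≤ (r : ℝ) := le_trans (le_max_right _ _) hmax
    -- partial sum rewrite
    have hsum : (∑ n ∈ Finset.range r,
        Complex.I ^ n / (n.factorial : ℂ) * (x : ℂ) ^ n * (y : ℂ) ^ n)
        = ∑ n ∈ Finset.range r, z ^ n / (n.factorial : ℂ) := by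
      apply Finset.sum_congr rfl
      intro n _
      rw [hz, mul_pow, mul_pow]
      ring
    rw [hsum]
    -- exp as tsum
    have hexp : Complex.exp z = ∑' n : ℕ, z ^ n / (n.factorial : ℂ) := by
      rw [Complex.exp_eq_exp_ℂ, NormedSpace.exp_eq_tsum_div]
    have hsummable : Summable (fun n : ℕ => z ^ n / (n.factorial : ℂ)) := by
      apply Summable.of_norm
      simpa [norm_div, norm_pow] using Real.summable_pow_div_factorial (‖z‖)
    have hsplit : Complex.exp z - (∑ n ∈ Finset.range r, z ^ n / (n.factorial : ℂ))
        = ∑' n : ℕ, z ^ (n + r) / ((n + r).factorial : ℂ) := by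
      rw [hexp, ← hsummable.sum_add_tsum_nat_add r]
      ring
    rw [hsplit]
    -- termwise bound: for m ≥ r, |z|^m / m! ≤ (1/2)^m
    have hterm : ∀ m : ℕ, r ≤ m →
        ‖z‖ ^ m / (m.factorial : ℝ) ≤ (1 / 2 : ℝ) ^ m := by
      intro m hm
      have hmpos : 0 < m := lt_of_lt_of_le hr hm
      have hm' : (r : ℝ) ≤ (m : ℝ) := by exact_mod_cast hm
      have hfacpos : (0 : ℝ) < (m.factorial : ℝ) := by positivity
      have hz2 : ‖z‖ * 2 ≤ (m : ℝ) / Real.exp 1 := by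
        rw [le_div_iff₀ (Real.exp_pos 1)]
        nlinarith [Real.exp_pos 1, norm_nonneg z]
      have key : ‖z‖ ^ m * 2 ^ m ≤ (m.factorial : ℝ) := by
        calc ‖z‖ ^ m * 2 ^ m = (‖z‖ * 2) ^ m := (mul_pow _ _ _).symm
          _ ≤ ((m : ℝ) / Real.exp 1) ^ m := pow_le_pow_left₀ (by positivity) hz2 m
          _ ≤ (m.factorial : ℝ) := by
              rw [div_pow, div_le_iff₀ (by positivity)]
              calc (m : ℝ) ^ m ≤ Real.exp 1 ^ m * m.factorial := aux_pow_le_factorial m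
                _ = (m.factorial : ℝ) * Real.exp 1 ^ m := mul_comm _ _
      rw [div_le_iff₀ hfacpos]
      have h2m : (0 : ℝ) < 2 ^ m := by positivity
      calc ‖z‖ ^ m ≤ (m.factorial : ℝ) / 2 ^ m := (le_div_iff₀ h2m).2 key
        _ = (1 / 2 : ℝ) ^ m * (m.factorial : ℝ) := by rw [div_pow]; ring
    -- summability of the norm tail
    have hs2 : Summable (fun n : ℕ => ‖z‖ ^ (n + r) / (((n + r).factorial : ℝ))) :=
      (Real.summable_pow_div_factorial (‖z‖)).comp_injective (add_left_injective r)
    have hsg : Summable (fun n : ℕ => (1 / 2 : ℝ) ^ (n + r)) := by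
      simp_rw [pow_add]
      exact (summable_geometric_of_lt_one (by norm_num) (by norm_num)).mul_right _
    have hnorm : ‖∑' n : ℕ, z ^ (n + r) / ((n + r).factorial : ℂ)‖
        ≤ ∑' n : ℕ, ‖z‖ ^ (n + r) / (((n + r).factorial : ℝ)) := by
      have := norm_tsum_le_tsum_norm (f := fun n : ℕ => z ^ (n + r) / ((n + r).factorial : ℂ))
        (by simpa [norm_div, norm_pow, Complex.norm_natCast] using hs2)
      simpa [norm_div, norm_pow, Complex.norm_natCast] using this
    have htail : (∑' n : ℕ, ‖z‖ ^ (n + r) / (((n + r).factorial : ℝ)))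
        ≤ ∑' n : ℕ, (1 / 2 : ℝ) ^ (n + r) :=
      Summable.tsum_le_tsum (fun n => hterm (n + r) (Nat.le_add_left r n)) hs2 hsg
    have hgeom : (∑' n : ℕ, (1 / 2 : ℝ) ^ (n + r)) = 2 * (1 / 2 : ℝ) ^ r := by
      simp_rw [pow_add]
      rw [tsum_mul_right, tsum_geometric_of_lt_one (by norm_num) (by norm_num)]
      norm_num
    have hfinal : 2 * (1 / 2 : ℝ) ^ r ≤ ε := by
      have h2r : (2 : ℝ) / ε ≤ 2 ^ (r : ℝ) :=
        (Real.logb_le_iff_le_rpow (by norm_num) (by positivity)).1 hrlog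
      rw [Real.rpow_natCast] at h2r
      have h2rp : (0 : ℝ) < (2 : ℝ) ^ r := by positivity
      rw [div_le_iff₀ hε] at h2r
      rw [one_div, inv_pow]
      rw [mul_comm, inv_mul_le_iff₀ h2rp] at *
      nlinarith
    calc ‖∑' n : ℕ, z ^ (n + r) / ((n + r).factorial : ℂ)‖
        ≤ ∑' n : ℕ, ‖z‖ ^ (n + r) / (((n + r).factorial : ℝ)) := hnorm
      _ ≤ ∑' n : ℕ, (1 / 2 : ℝ) ^ (n + r) := htail
      _ = 2 * (1 / 2 : ℝ) ^ r := hgeom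
      _ ≤ ε := hfinal
  refine ⟨main, ?_⟩
  set M := max (2 * Real.exp 1 * A) (Real.logb 2 (2 / ε)) with hM
  have hMpos : 0 < M := lt_of_lt_of_le (by positivity) (le_max_left _ _)
  refine ⟨⌊M⌋₊ + 1, ?_, fun n x => Complex.I ^ (n : ℕ) / ((n : ℕ).factorial : ℂ) * (x : ℂ) ^ (n : ℕ),
    fun n y => (y : ℂ) ^ (n : ℕ), ?_⟩
  · push_cast
    have := Nat.floor_le (le_of_lt hMpos)
    linarith
  · intro x hx y hy
    have h1 : M ≤ ((⌊M⌋₊ + 1 : ℕ) : ℝ) := by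
      push_cast
      exact le_of_lt (Nat.lt_floor_add_one M)
    have := main (⌊M⌋₊ + 1) (Nat.succ_pos _) h1 x hx y hy
    rw [Fin.sum_univ_eq_sum_range (fun n => Complex.I ^ n / ((n).factorial : ℂ) * (x : ℂ) ^ n * (y : ℂ) ^ n)] at *
    convert this using 4
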